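/- Let R be a principal ideal domain and let E be the endomorphism dg algebra of the complex J : I_{H_1} ⊕ I_{H_2} → I_{E_1} ⊕ I_{E_2} → I_{P_1} ⊕ I_{P_2} (the resolution of the constant representation C on the quiver of the stratification A_2 of S^2). Then H^0(E) ≅ R generated by the identity, H^1(E) = 0, and H^2(E) is free of rank 1; moreover the cohomology algebra H(E) is isomorphic to R[t]/(t^2) with t in degree 2, and there is a dg algebra quasi-isomorphism H(E) → E. -/

import Mathlib

open CategoryTheory CategoryTheory.Limits

/-- The vertices of the quiver of the stratification `A₂` of the 2-sphere: two hemispheres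
`H₁, H₂`, two half-equators `E₁, E₂`, two points `P₁, P₂`. -/
inductive V2 : Type
  | H1 | H2 | E1 | E2 | P1 | P2
  deriving DecidableEq

namespace V2

/-- dimension-like rank: points < equator arcs < hemispheres. -/
def rank : V2 → ℕ
  | H1 | H2 => 2
  | E1 | E2 => 1
  | P1 | P2 => 0

/-- In `A₂` there is an arrow `a → b` (i.e. `a ⊂ closure b`) iff `a = b` or `rank a < rank b`;
identifying all parallel paths, the category of representations of the quiver with relations
is the category of functors on this preorder. -/
instance : Preorder V2 where
  le a b := a = b ∨ rank a < rank b
  le_refl a := Or.inl rfl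
  le_trans a b c hab hbc := by
    rcases hab with rfl | hab
    · exact hbc
    · rcases hbc with rfl | hbc
      · exact Or.inr hab
      · exact Or.inr (hab.trans hbc)

instance : DecidableRel (α := V2) (· ≤ ·) := fun a b =>
  inferInstanceAs (Decidable (_ ∨ _))

end V2

variable (R : Type) [CommRing R]

/-- The category of representations of the quiver with relations of `A₂`
(= functors from the preorder `V2` to `R`-modules). -/
abbrev Rep2 := V2 ⥤ ModuleCat.{0} R

/-- The representation `I_v`: the extension by zero of the constant representation on the
closure of the stratum `v`; it has stalk `R` at every vertex `x ≤ v` (identity arrows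
among those) and `0` elsewhere. -/
def IRep (v : V2) : Rep2 R where
  obj x := ModuleCat.of R (PLift (x ≤ v) → R)
  map {x y} f := ModuleCat.ofHom
    { toFun := fun g h => g ⟨(leOfHom f).trans h.down⟩
      map_add' := fun _ _ => rfl
      map_smul' := fun _ _ => rfl }

/-- The constant representation `C` (stalk `R` everywhere, identity arrows). -/
def CRep : Rep2 R := (Functor.const V2).obj (ModuleCat.of R R)

/-- The canonical generator of `Hom(I_v, I_w)` for `w ≤ v` (identity on the common stalks,
zero elsewhere). -/
def canMor {v w : V2} (h : w ≤ v) : IRep R v ⟶ IRep R w where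
  app x := ModuleCat.ofHom
    { toFun := fun g hw => g ⟨hw.down.trans h⟩
      map_add' := fun _ _ => rfl
      map_smul' := fun _ _ => rfl }

/-- The canonical (adjunction) morphism `C ⟶ I_v`. -/
def unitMor (v : V2) : CRep R ⟶ IRep R v where
  app x := ModuleCat.ofHom
    { toFun := fun r _ => r
      map_add' := fun _ _ => rfl
      map_smul' := fun _ _ => rfl }

open V2

noncomputable section

/-- first differential `I_{H₁} ⊕ I_{H₂} ⟶ I_{E₁} ⊕ I_{E₂}`, given by the matrix
`((h^e₁₁, −h^e₂₁), (h^e₁₂, −h^e₂₂))`. -/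
def d2_0 : (IRep R H1 ⊞ IRep R H2) ⟶ (IRep R E1 ⊞ IRep R E2) :=
  biprod.lift
    (biprod.desc (canMor R (by decide : (E1 : V2) ≤ H1))
      (-(canMor R (by decide : (E1 : V2) ≤ H2))))
    (biprod.desc (canMor R (by decide : (E2 : V2) ≤ H1))
      (-(canMor R (by decide : (E2 : V2) ≤ H2))))

/-- second differential `I_{E₁} ⊕ I_{E₂} ⟶ I_{P₁} ⊕ I_{P₂}`, given by the matrix
`((e₁₁, −e₂₁), (−e₁₂, e₂₂))`. -/
def d2_1 : (IRep R E1 ⊞ IRep R E2) ⟶ (IRep R P1 ⊞ IRep R P2) :=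
  biprod.lift
    (biprod.desc (canMor R (by decide : (P1 : V2) ≤ E1))
      (-(canMor R (by decide : (P1 : V2) ≤ E2))))
    (biprod.desc (-(canMor R (by decide : (P2 : V2) ≤ E1)))
      (canMor R (by decide : (P2 : V2) ≤ E2)))

/-- The augmentation `C ⟶ I_{H₁} ⊕ I_{H₂}`. -/
def aug2 : CRep R ⟶ (IRep R H1 ⊞ IRep R H2) :=
  biprod.lift (unitMor R H1) (unitMor R H2)


-- The three-term complex `J : J⁰ → J¹ → J²` resolving `C`, and its endomorphism dg algebra
-- `E = End J`, with `E^m = ∏_p Hom(J^p, J^{p+m})` and differential `d f = d_J ∘ f − (−1)^m f ∘ d_J`.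

/-- `J⁰ = I_{H₁} ⊕ I_{H₂}`. -/
abbrev J2_0 := IRep R H1 ⊞ IRep R H2
/-- `J¹ = I_{E₁} ⊕ I_{E₂}`. -/
abbrev J2_1 := IRep R E1 ⊞ IRep R E2
/-- `J² = I_{P₁} ⊕ I_{P₂}`. -/
abbrev J2_2 := IRep R P1 ⊞ IRep R P2

/-- degree `−1` part of `End J`. -/
abbrev End2neg := ((J2_1 R ⟶ J2_0 R) × (J2_2 R ⟶ J2_1 R))
/-- degree `0` part of `End J`. -/
abbrev End2_0 := ((J2_0 R ⟶ J2_0 R) × (J2_1 R ⟶ J2_1 R) × (J2_2 R ⟶ J2_2 R))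
/-- degree `1` part of `End J`. -/
abbrev End2_1 := ((J2_0 R ⟶ J2_1 R) × (J2_1 R ⟶ J2_2 R))
/-- degree `2` part of `End J`. -/
abbrev End2_2 := (J2_0 R ⟶ J2_2 R)

/-- differential `E^{-1} → E^0`. -/
def D2neg : End2neg R → End2_0 R :=
  fun f => (d2_0 R ≫ f.1, f.1 ≫ d2_0 R + d2_1 R ≫ f.2, f.2 ≫ d2_1 R)
/-- differential `E^0 → E^1`. -/
def D2_0 : End2_0 R → End2_1 R :=
  fun f => (f.1 ≫ d2_0 R - d2_0 R ≫ f.2.1, f.2.1 ≫ d2_1 R - d2_1 R ≫ f.2.2)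
/-- differential `E^1 → E^2`. -/
def D2_1 : End2_1 R → End2_2 R :=
  fun f => f.1 ≫ d2_1 R + d2_0 R ≫ f.2

/-- the identity of `End J`. -/
def one2 : End2_0 R := (𝟙 _, 𝟙 _, 𝟙 _)
/-- composition product `E⁰ ⋅ E⁰ → E⁰`. -/
def mul2_00 : End2_0 R → End2_0 R → End2_0 R :=
  fun f g => (g.1 ≫ f.1, g.2.1 ≫ f.2.1, g.2.2 ≫ f.2.2)
/-- composition product `E⁰ ⋅ E¹ → E¹`. -/
def mul2_01 : End2_0 R → End2_1 R → End2_1 R :=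
  fun f u => (u.1 ≫ f.2.1, u.2 ≫ f.2.2)
/-- composition product `E¹ ⋅ E⁰ → E¹`. -/
def mul2_10 : End2_1 R → End2_0 R → End2_1 R :=
  fun u f => (f.1 ≫ u.1, f.2.1 ≫ u.2)
/-- composition product `E¹ ⋅ E¹ → E²`. -/
def mul2_11 : End2_1 R → End2_1 R → End2_2 R :=
  fun u v => v.1 ≫ u.2
/-- composition product `E⁰ ⋅ E² → E²`. -/
def mul2_02 : End2_0 R → End2_2 R → End2_2 R :=
  fun f t => t ≫ f.2.2
/-- composition product `E² ⋅ E⁰ → E²`. -/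
def mul2_20 : End2_2 R → End2_0 R → End2_2 R :=
  fun t f => f.1 ≫ t

-- ===== auxiliary machinery =====
namespace Stmt12Aux
open V2

variable {R : Type} [CommRing R]

/-- the basepoint coordinate of a morphism `I_v ⟶ I_w`. -/
def kap {v w : V2} (η : IRep R v ⟶ IRep R w) : R :=
  η.app w (fun _ => (1:R)) ⟨le_refl w⟩

lemma app_one {v w : V2} (h : w ≤ v) (η : IRep R v ⟶ IRep R w)
    (x : V2) (hw : x ≤ w) :
    η.app x (fun _ => (1:R)) ⟨hw⟩ = kap η := by
  have e := congrArg (fun (f : (IRep R v).obj x ⟶ (IRep R w).obj w) =>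
    f (fun _ => (1:R)) ⟨le_refl w⟩) (η.naturality (homOfLE hw))
  exact e.symm

lemma app_one_zero {v w : V2} (hn : ¬ w ≤ v) (η : IRep R v ⟶ IRep R w)
    (x : V2) (hw : x ≤ w) :
    η.app x (fun _ => (1:R)) ⟨hw⟩ = 0 := by
  have e := congrArg (fun (f : (IRep R v).obj x ⟶ (IRep R w).obj w) =>
    f (fun _ => (1:R)) ⟨le_refl w⟩) (η.naturality (homOfLE hw))
  have z : ((IRep R v).map (homOfLE hw) (fun _ => (1:R)) : (IRep R v).obj w) = 0 := by
    funext hh; exact absurd hh.down hn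
  calc η.app x (fun _ => (1:R)) ⟨hw⟩
      = η.app w ((IRep R v).map (homOfLE hw) (fun _ => (1:R))) ⟨le_refl w⟩ := e.symm
    _ = η.app w 0 ⟨le_refl w⟩ := by rw [z]
    _ = 0 := by rw [map_zero]; rfl

lemma ihom_ext {v w : V2} (η θ : IRep R v ⟶ IRep R w)
    (H : ∀ (x : V2) (hv : x ≤ v) (hw : x ≤ w),
      η.app x (fun _ => (1:R)) ⟨hw⟩ = θ.app x (fun _ => (1:R)) ⟨hw⟩) : η = θ := by
  apply NatTrans.ext
  funext x
  apply ModuleCat.hom_ext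
  apply LinearMap.ext
  intro g
  funext hw
  by_cases hv : x ≤ v
  · have hg : g = g ⟨hv⟩ • (fun _ => (1:R)) := by
      funext h'
      have : h' = ⟨hv⟩ := Subsingleton.elim _ _
      rw [this]; simp [Pi.smul_apply, smul_eq_mul]
    rw [hg]; erw [map_smul, map_smul]
    exact congrArg (fun t => g ⟨hv⟩ • t) (H x hv hw.down)
  · have hg : g = 0 := by
      funext h'; exact absurd h'.down hv
    rw [hg, map_zero, map_zero]

-- kap computation rules
@[simp] lemma kap_zero {v w : V2} : kap (0 : IRep R v ⟶ IRep R w) = 0 := by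
  rfl

@[simp] lemma kap_add {v w : V2} (η θ : IRep R v ⟶ IRep R w) :
    kap (η + θ) = kap η + kap θ := by
  rfl

@[simp] lemma kap_neg {v w : V2} (η : IRep R v ⟶ IRep R w) :
    kap (-η) = - kap η := by
  rfl

@[simp] lemma kap_sub {v w : V2} (η θ : IRep R v ⟶ IRep R w) :
    kap (η - θ) = kap η - kap θ := by
  rfl

@[simp] lemma kap_smul {v w : V2} (r : R) (η : IRep R v ⟶ IRep R w) :
    kap (r • η) = r * kap η := by
  rfl

@[simp] lemma kap_id {v : V2} : kap (𝟙 (IRep R v)) = 1 := rfl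

@[simp] lemma kap_canMor {v w : V2} (h : w ≤ v) : kap (canMor R h) = 1 := rfl

lemma kap_comp {v w u : V2} (hwv : w ≤ v) (huw : u ≤ w)
    (η : IRep R v ⟶ IRep R w) (θ : IRep R w ⟶ IRep R u) :
    kap (η ≫ θ) = kap η * kap θ := by
  have h1 : (η.app u (fun _ => (1:R)) : (IRep R w).obj u)
      = kap η • (fun _ => (1:R)) := by
    funext h'
    have : h' = ⟨huw⟩ := Subsingleton.elim _ _
    rw [this]
    simpa [Pi.smul_apply, smul_eq_mul] using app_one hwv η u huw
  show θ.app u (η.app u (fun _ => (1:R))) ⟨le_refl u⟩ = _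
  rw [h1]; erw [map_smul]
  show kap η • (θ.app u (fun _ => (1:R)) ⟨le_refl u⟩) = _
  rw [smul_eq_mul]; rfl

lemma eq_of_kap {v w : V2} (h : w ≤ v) (η θ : IRep R v ⟶ IRep R w)
    (e : kap η = kap θ) : η = θ :=
  ihom_ext η θ fun x _ hw => by rw [app_one h η x hw, app_one h θ x hw, e]

lemma eq_zero_hom {v w : V2} (hn : ¬ w ≤ v) (η : IRep R v ⟶ IRep R w) : η = 0 :=
  ihom_ext η 0 fun x _ hw => by
    rw [app_one_zero hn η x hw]; rfl


lemma kap_compu {v w u : V2} (η : IRep R v ⟶ IRep R w) (θ : IRep R w ⟶ IRep R u) :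
    kap (η ≫ θ) = kap η * kap θ := by
  by_cases hwv : w ≤ v
  · by_cases huw : u ≤ w
    · exact kap_comp hwv huw η θ
    · rw [eq_zero_hom huw θ, Limits.comp_zero]; simp
  · rw [eq_zero_hom hwv η, Limits.zero_comp]; simp

section Biprod

variable {A B C D X Y : Rep2 R}

lemma mid (f : A ⟶ C ⊞ D) (g : C ⊞ D ⟶ X) :
    f ≫ g = (f ≫ biprod.fst) ≫ (biprod.inl ≫ g)
      + (f ≫ biprod.snd) ≫ (biprod.inr ≫ g) := by
  calc f ≫ g = f ≫ 𝟙 _ ≫ g := by rw [Category.id_comp]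
    _ = f ≫ (biprod.fst ≫ biprod.inl + biprod.snd ≫ biprod.inr) ≫ g := by rw [biprod.total]
    _ = _ := by simp only [Preadditive.add_comp, Preadditive.comp_add, Category.assoc]

lemma bi_ext {φ ψ : A ⊞ B ⟶ C ⊞ D}
    (h1 : biprod.inl ≫ φ ≫ biprod.fst = biprod.inl ≫ ψ ≫ biprod.fst)
    (h2 : biprod.inl ≫ φ ≫ biprod.snd = biprod.inl ≫ ψ ≫ biprod.snd)
    (h3 : biprod.inr ≫ φ ≫ biprod.fst = biprod.inr ≫ ψ ≫ biprod.fst)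
    (h4 : biprod.inr ≫ φ ≫ biprod.snd = biprod.inr ≫ ψ ≫ biprod.snd) : φ = ψ := by
  apply biprod.hom_ext'
  · apply biprod.hom_ext
    · rw [Category.assoc, Category.assoc]; exact h1
    · rw [Category.assoc, Category.assoc]; exact h2
  · apply biprod.hom_ext
    · rw [Category.assoc, Category.assoc]; exact h3
    · rw [Category.assoc, Category.assoc]; exact h4

lemma comp11 (φ : A ⊞ B ⟶ C ⊞ D) (χ : C ⊞ D ⟶ X ⊞ Y) :
    biprod.inl ≫ (φ ≫ χ) ≫ biprod.fst
      = (biprod.inl ≫ φ ≫ biprod.fst) ≫ (biprod.inl ≫ χ ≫ biprod.fst)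
      + (biprod.inl ≫ φ ≫ biprod.snd) ≫ (biprod.inr ≫ χ ≫ biprod.fst) := by
  have h := mid (biprod.inl ≫ φ) (χ ≫ biprod.fst)
  simpa only [Category.assoc] using h

lemma comp12 (φ : A ⊞ B ⟶ C ⊞ D) (χ : C ⊞ D ⟶ X ⊞ Y) :
    biprod.inl ≫ (φ ≫ χ) ≫ biprod.snd
      = (biprod.inl ≫ φ ≫ biprod.fst) ≫ (biprod.inl ≫ χ ≫ biprod.snd)
      + (biprod.inl ≫ φ ≫ biprod.snd) ≫ (biprod.inr ≫ χ ≫ biprod.snd) := by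
  have h := mid (biprod.inl ≫ φ) (χ ≫ biprod.snd)
  simpa only [Category.assoc] using h

lemma comp21 (φ : A ⊞ B ⟶ C ⊞ D) (χ : C ⊞ D ⟶ X ⊞ Y) :
    biprod.inr ≫ (φ ≫ χ) ≫ biprod.fst
      = (biprod.inr ≫ φ ≫ biprod.fst) ≫ (biprod.inl ≫ χ ≫ biprod.fst)
      + (biprod.inr ≫ φ ≫ biprod.snd) ≫ (biprod.inr ≫ χ ≫ biprod.fst) := by
  have h := mid (biprod.inr ≫ φ) (χ ≫ biprod.fst)
  simpa only [Category.assoc] using h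

lemma comp22 (φ : A ⊞ B ⟶ C ⊞ D) (χ : C ⊞ D ⟶ X ⊞ Y) :
    biprod.inr ≫ (φ ≫ χ) ≫ biprod.snd
      = (biprod.inr ≫ φ ≫ biprod.fst) ≫ (biprod.inl ≫ χ ≫ biprod.snd)
      + (biprod.inr ≫ φ ≫ biprod.snd) ≫ (biprod.inr ≫ χ ≫ biprod.snd) := by
  have h := mid (biprod.inr ≫ φ) (χ ≫ biprod.snd)
  simpa only [Category.assoc] using h

end Biprod

-- K-coordinates of a morphism between biproducts of `IRep`s
variable {a b c d e f : V2}

def K11 (φ : IRep R a ⊞ IRep R b ⟶ IRep R c ⊞ IRep R d) : R :=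
  kap (biprod.inl ≫ φ ≫ biprod.fst)
def K12 (φ : IRep R a ⊞ IRep R b ⟶ IRep R c ⊞ IRep R d) : R :=
  kap (biprod.inl ≫ φ ≫ biprod.snd)
def K21 (φ : IRep R a ⊞ IRep R b ⟶ IRep R c ⊞ IRep R d) : R :=
  kap (biprod.inr ≫ φ ≫ biprod.fst)
def K22 (φ : IRep R a ⊞ IRep R b ⟶ IRep R c ⊞ IRep R d) : R :=
  kap (biprod.inr ≫ φ ≫ biprod.snd)

lemma Kext (φ ψ : IRep R a ⊞ IRep R b ⟶ IRep R c ⊞ IRep R d)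
    (h11 : c ≤ a → K11 φ = K11 ψ) (h12 : d ≤ a → K12 φ = K12 ψ)
    (h21 : c ≤ b → K21 φ = K21 ψ) (h22 : d ≤ b → K22 φ = K22 ψ) : φ = ψ := by
  apply bi_ext
  · by_cases h : c ≤ a
    · exact eq_of_kap h _ _ (h11 h)
    · rw [eq_zero_hom h (biprod.inl ≫ φ ≫ biprod.fst),
        eq_zero_hom h (biprod.inl ≫ ψ ≫ biprod.fst)]
  · by_cases h : d ≤ a
    · exact eq_of_kap h _ _ (h12 h)
    · rw [eq_zero_hom h (biprod.inl ≫ φ ≫ biprod.snd),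
        eq_zero_hom h (biprod.inl ≫ ψ ≫ biprod.snd)]
  · by_cases h : c ≤ b
    · exact eq_of_kap h _ _ (h21 h)
    · rw [eq_zero_hom h (biprod.inr ≫ φ ≫ biprod.fst),
        eq_zero_hom h (biprod.inr ≫ ψ ≫ biprod.fst)]
  · by_cases h : d ≤ b
    · exact eq_of_kap h _ _ (h22 h)
    · rw [eq_zero_hom h (biprod.inr ≫ φ ≫ biprod.snd),
        eq_zero_hom h (biprod.inr ≫ ψ ≫ biprod.snd)]

section Krules
variable (φ ψ : IRep R a ⊞ IRep R b ⟶ IRep R c ⊞ IRep R d)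
variable (χ : IRep R c ⊞ IRep R d ⟶ IRep R e ⊞ IRep R f)

@[simp] lemma K11_comp : K11 (φ ≫ χ) = K11 φ * K11 χ + K12 φ * K21 χ := by
  rw [K11, comp11, kap_add, kap_compu, kap_compu]; rfl
@[simp] lemma K12_comp : K12 (φ ≫ χ) = K11 φ * K12 χ + K12 φ * K22 χ := by
  rw [K12, comp12, kap_add, kap_compu, kap_compu]; rfl
@[simp] lemma K21_comp : K21 (φ ≫ χ) = K21 φ * K11 χ + K22 φ * K21 χ := by
  rw [K21, comp21, kap_add, kap_compu, kap_compu]; rfl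
@[simp] lemma K22_comp : K22 (φ ≫ χ) = K21 φ * K12 χ + K22 φ * K22 χ := by
  rw [K22, comp22, kap_add, kap_compu, kap_compu]; rfl

@[simp] lemma K11_sub : K11 (φ - ψ) = K11 φ - K11 ψ := by
  rw [K11, K11, K11, Preadditive.sub_comp, Preadditive.comp_sub, kap_sub]
@[simp] lemma K12_sub : K12 (φ - ψ) = K12 φ - K12 ψ := by
  rw [K12, K12, K12, Preadditive.sub_comp, Preadditive.comp_sub, kap_sub]
@[simp] lemma K21_sub : K21 (φ - ψ) = K21 φ - K21 ψ := by
  rw [K21, K21, K21, Preadditive.sub_comp, Preadditive.comp_sub, kap_sub]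
@[simp] lemma K22_sub : K22 (φ - ψ) = K22 φ - K22 ψ := by
  rw [K22, K22, K22, Preadditive.sub_comp, Preadditive.comp_sub, kap_sub]

@[simp] lemma K11_add : K11 (φ + ψ) = K11 φ + K11 ψ := by
  rw [K11, K11, K11, Preadditive.add_comp, Preadditive.comp_add, kap_add]
@[simp] lemma K12_add : K12 (φ + ψ) = K12 φ + K12 ψ := by
  rw [K12, K12, K12, Preadditive.add_comp, Preadditive.comp_add, kap_add]
@[simp] lemma K21_add : K21 (φ + ψ) = K21 φ + K21 ψ := by
  rw [K21, K21, K21, Preadditive.add_comp, Preadditive.comp_add, kap_add]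
@[simp] lemma K22_add : K22 (φ + ψ) = K22 φ + K22 ψ := by
  rw [K22, K22, K22, Preadditive.add_comp, Preadditive.comp_add, kap_add]

@[simp] lemma K11_smul (r : R) : K11 (r • φ) = r * K11 φ := by
  rw [K11, K11, Linear.smul_comp, Linear.comp_smul, kap_smul]
@[simp] lemma K12_smul (r : R) : K12 (r • φ) = r * K12 φ := by
  rw [K12, K12, Linear.smul_comp, Linear.comp_smul, kap_smul]
@[simp] lemma K21_smul (r : R) : K21 (r • φ) = r * K21 φ := by
  rw [K21, K21, Linear.smul_comp, Linear.comp_smul, kap_smul]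
@[simp] lemma K22_smul (r : R) : K22 (r • φ) = r * K22 φ := by
  rw [K22, K22, Linear.smul_comp, Linear.comp_smul, kap_smul]

@[simp] lemma K11_zero : K11 (0 : IRep R a ⊞ IRep R b ⟶ IRep R c ⊞ IRep R d) = 0 := by
  simp [K11]
@[simp] lemma K12_zero : K12 (0 : IRep R a ⊞ IRep R b ⟶ IRep R c ⊞ IRep R d) = 0 := by
  simp [K12]
@[simp] lemma K21_zero : K21 (0 : IRep R a ⊞ IRep R b ⟶ IRep R c ⊞ IRep R d) = 0 := by
  simp [K21]
@[simp] lemma K22_zero : K22 (0 : IRep R a ⊞ IRep R b ⟶ IRep R c ⊞ IRep R d) = 0 := by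
  simp [K22]

@[simp] lemma K11_id : K11 (𝟙 (IRep R a ⊞ IRep R b)) = 1 := by
  rw [K11, Category.id_comp, biprod.inl_fst]; exact kap_id
@[simp] lemma K22_id : K22 (𝟙 (IRep R a ⊞ IRep R b)) = 1 := by
  rw [K22, Category.id_comp, biprod.inr_snd]; exact kap_id
@[simp] lemma K12_id : K12 (𝟙 (IRep R a ⊞ IRep R b)) = 0 := by
  rw [K12, Category.id_comp, biprod.inl_snd]; exact kap_zero
@[simp] lemma K21_id : K21 (𝟙 (IRep R a ⊞ IRep R b)) = 0 := by
  rw [K21, Category.id_comp, biprod.inr_fst]; exact kap_zero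

end Krules
end Stmt12Aux
namespace Stmt12Aux
open V2
variable {R : Type} [CommRing R]
variable {a b c d : V2}

lemma K11_vanish (h : ¬ c ≤ a) (φ : IRep R a ⊞ IRep R b ⟶ IRep R c ⊞ IRep R d) :
    K11 φ = 0 := by
  rw [K11, eq_zero_hom h (biprod.inl ≫ φ ≫ biprod.fst)]; simp
lemma K12_vanish (h : ¬ d ≤ a) (φ : IRep R a ⊞ IRep R b ⟶ IRep R c ⊞ IRep R d) :
    K12 φ = 0 := by
  rw [K12, eq_zero_hom h (biprod.inl ≫ φ ≫ biprod.snd)]; simp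
lemma K21_vanish (h : ¬ c ≤ b) (φ : IRep R a ⊞ IRep R b ⟶ IRep R c ⊞ IRep R d) :
    K21 φ = 0 := by
  rw [K21, eq_zero_hom h (biprod.inr ≫ φ ≫ biprod.fst)]; simp
lemma K22_vanish (h : ¬ d ≤ b) (φ : IRep R a ⊞ IRep R b ⟶ IRep R c ⊞ IRep R d) :
    K22 φ = 0 := by
  rw [K22, eq_zero_hom h (biprod.inr ≫ φ ≫ biprod.snd)]; simp

@[simp] lemma K11_lift (x : IRep R a ⟶ IRep R c) (y : IRep R b ⟶ IRep R c)
    (x' : IRep R a ⟶ IRep R d) (y' : IRep R b ⟶ IRep R d) :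
    K11 (biprod.lift (biprod.desc x y) (biprod.desc x' y')) = kap x := by
  rw [K11]; simp
@[simp] lemma K12_lift (x : IRep R a ⟶ IRep R c) (y : IRep R b ⟶ IRep R c)
    (x' : IRep R a ⟶ IRep R d) (y' : IRep R b ⟶ IRep R d) :
    K12 (biprod.lift (biprod.desc x y) (biprod.desc x' y')) = kap x' := by
  rw [K12]; simp
@[simp] lemma K21_lift (x : IRep R a ⟶ IRep R c) (y : IRep R b ⟶ IRep R c)
    (x' : IRep R a ⟶ IRep R d) (y' : IRep R b ⟶ IRep R d) :
    K21 (biprod.lift (biprod.desc x y) (biprod.desc x' y')) = kap y := by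
  rw [K21]; simp
@[simp] lemma K22_lift (x : IRep R a ⟶ IRep R c) (y : IRep R b ⟶ IRep R c)
    (x' : IRep R a ⟶ IRep R d) (y' : IRep R b ⟶ IRep R d) :
    K22 (biprod.lift (biprod.desc x y) (biprod.desc x' y')) = kap y' := by
  rw [K22]; simp

@[simp] lemma K11_map (x : IRep R a ⟶ IRep R c) (y : IRep R b ⟶ IRep R d) :
    K11 (biprod.map x y) = kap x := by
  rw [K11]; simp [biprod.inl_map_assoc]
@[simp] lemma K12_map (x : IRep R a ⟶ IRep R c) (y : IRep R b ⟶ IRep R d) :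
    K12 (biprod.map x y) = 0 := by
  rw [K12]; simp [biprod.inl_map_assoc]
@[simp] lemma K21_map (x : IRep R a ⟶ IRep R c) (y : IRep R b ⟶ IRep R d) :
    K21 (biprod.map x y) = 0 := by
  rw [K21]; simp [biprod.inr_map_assoc]
@[simp] lemma K22_map (x : IRep R a ⟶ IRep R c) (y : IRep R b ⟶ IRep R d) :
    K22 (biprod.map x y) = kap y := by
  rw [K22]; simp [biprod.inr_map_assoc]

-- K-tables for the differentials
@[simp] lemma Kd0_11 : K11 (d2_0 R) = 1 := by rw [d2_0]; simp
@[simp] lemma Kd0_12 : K12 (d2_0 R) = 1 := by rw [d2_0]; simp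
@[simp] lemma Kd0_21 : K21 (d2_0 R) = -1 := by rw [d2_0]; simp
@[simp] lemma Kd0_22 : K22 (d2_0 R) = -1 := by rw [d2_0]; simp
@[simp] lemma Kd1_11 : K11 (d2_1 R) = 1 := by rw [d2_1]; simp
@[simp] lemma Kd1_12 : K12 (d2_1 R) = -1 := by rw [d2_1]; simp
@[simp] lemma Kd1_21 : K21 (d2_1 R) = -1 := by rw [d2_1]; simp
@[simp] lemma Kd1_22 : K22 (d2_1 R) = 1 := by rw [d2_1]; simp

/-- the canonical generator of `H²`. -/
def t0 (R : Type) [CommRing R] : End2_2 R :=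
  biprod.lift (biprod.desc (canMor R (by decide : (P1 : V2) ≤ H1)) 0)
    (biprod.desc 0 0)

@[simp] lemma Kt0_11 : K11 (t0 R) = 1 := by rw [t0]; simp
@[simp] lemma Kt0_12 : K12 (t0 R) = 0 := by rw [t0]; simp
@[simp] lemma Kt0_21 : K21 (t0 R) = 0 := by rw [t0]; simp
@[simp] lemma Kt0_22 : K22 (t0 R) = 0 := by rw [t0]; simp

end Stmt12Aux

open V2 in
theorem Stmt12Aux.main (R : Type) [CommRing R] [IsDomain R]
    [IsPrincipalIdealRing R] :
    ∃ t₀ : End2_2 R,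
      -- `H⁰(E)` is free of rank 1, generated by the identity:
      (D2_0 R (one2 R) = 0) ∧
      (∀ z : End2_0 R, D2_0 R z = 0 →
        ∃! r : R, ∃ u : End2neg R, z - r • one2 R = D2neg R u) ∧
      -- `H¹(E) = 0`:
      (∀ z : End2_1 R, D2_1 R z = 0 → ∃ u : End2_0 R, z = D2_0 R u) ∧
      -- `H²(E)` is free of rank 1, generated by `t₀`:
      (∀ z : End2_2 R, ∃! r : R, ∃ u : End2_1 R, z - r • t₀ = D2_1 R u) ∧
      -- the representatives `{id, t₀}` are closed under multiplication, so that
      -- `H(E) ≅ R[t]/(t²)` and class ↦ representative is a dg algebra quasi-isomorphism: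
      mul2_02 R (one2 R) t₀ = t₀ ∧ mul2_20 R t₀ (one2 R) = t₀ ∧
      mul2_00 R (one2 R) (one2 R) = one2 R := by
  -- every element of `E⁻¹` is zero, hence `D2neg` is identically `0`
  have hneg : ∀ u : End2neg R, D2neg R u = 0 := by
    intro u
    have h1 : u.1 = 0 := by
      apply Kext
      · intro h; exact absurd h (by decide)
      · intro h; exact absurd h (by decide)
      · intro h; exact absurd h (by decide)
      · intro h; exact absurd h (by decide)
    have h2 : u.2 = 0 := by
      apply Kext
      · intro h; exact absurd h (by decide)
      · intro h; exact absurd h (by decide)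
      · intro h; exact absurd h (by decide)
      · intro h; exact absurd h (by decide)
    simp [D2neg, h1, h2, Prod.ext_iff]
  refine ⟨t0 R, ?_, ?_, ?_, ?_, ?_, ?_, ?_⟩
  · -- D2_0 (one2) = 0
    simp [D2_0, one2, Prod.ext_iff]
  · -- H⁰
    intro z hz
    have h1 : z.1 ≫ d2_0 R - d2_0 R ≫ z.2.1 = 0 := congrArg Prod.fst hz
    have h2 : z.2.1 ≫ d2_1 R - d2_1 R ≫ z.2.2 = 0 := congrArg Prod.snd hz
    -- vanishing off-diagonal coordinates
    have vz1a : K12 z.1 = 0 := K12_vanish (by decide) _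
    have vz1b : K21 z.1 = 0 := K21_vanish (by decide) _
    have vz2a : K12 z.2.1 = 0 := K12_vanish (by decide) _
    have vz2b : K21 z.2.1 = 0 := K21_vanish (by decide) _
    have vz3a : K12 z.2.2 = 0 := K12_vanish (by decide) _
    have vz3b : K21 z.2.2 = 0 := K21_vanish (by decide) _
    have e1 := congrArg K11 h1
    have e2 := congrArg K12 h1
    have e3 := congrArg K22 h1
    have e4 := congrArg K11 h2
    have e5 := congrArg K21 h2
    have e6 := congrArg K22 h2
    simp [vz1a, vz1b, vz2a, vz2b, vz3a, vz3b] at e1 e2 e3 e4 e5 e6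
    -- now all six diagonal coordinates are equal to r
    refine ⟨K11 z.1, ⟨0, ?_⟩, ?_⟩
    · have hz0 : z = K11 z.1 • one2 R := by
        refine Prod.ext ?_ (Prod.ext ?_ ?_)
        · apply Kext
          · intro _; simp [one2]
          · intro h; exact absurd h (by decide)
          · intro h; exact absurd h (by decide)
          · intro _; simp [one2]; linear_combination -e2 - e3
        · apply Kext
          · intro _; simp [one2]; linear_combination -e1
          · intro h; exact absurd h (by decide)
          · intro h; exact absurd h (by decide)
          · intro _; simp [one2]; linear_combination -e2
        · apply Kext
          · intro _; simp [one2]; linear_combination e5 - e2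
          · intro h; exact absurd h (by decide)
          · intro h; exact absurd h (by decide)
          · intro _; simp [one2]; linear_combination -e6 - e2
      rw [hneg 0, ← hz0, sub_self]
    · rintro r' ⟨u, hu⟩
      rw [hneg u, sub_eq_zero] at hu
      have := congrArg (fun w : End2_0 R => K11 w.1) hu
      simpa [one2, eq_comm] using this
  · -- H¹
    intro z hz
    have e1 := congrArg K11 hz
    have e2 := congrArg K12 hz
    have e3 := congrArg K21 hz
    have e4 := congrArg K22 hz
    simp [D2_1] at e1 e2 e3 e4
    refine ⟨(biprod.map (K11 z.1 • 𝟙 _) ((-K21 z.1) • 𝟙 _),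
      biprod.map (0 : IRep R E1 ⟶ IRep R E1) ((K11 z.1 - K12 z.1) • 𝟙 _),
      biprod.map ((-K11 z.2) • 𝟙 _) (K12 z.2 • 𝟙 _)), ?_⟩
    refine Prod.ext ?_ ?_
    · apply Kext
      · intro _; simp [D2_0]
      · intro _; simp [D2_0]
      · intro _; simp [D2_0]
      · intro _; simp [D2_0]; linear_combination -e1 - e3
    · apply Kext
      · intro _; simp [D2_0]
      · intro _; simp [D2_0]
      · intro _; simp [D2_0]; linear_combination e1
      · intro _; simp [D2_0]; linear_combination e2
  · -- H²
    intro z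
    set r : R := K11 z + K12 z + K21 z + K22 z with hr
    refine ⟨r, ⟨(biprod.lift (biprod.desc 0 ((K21 z + K11 z - r) • canMor R (by decide)))
        (biprod.desc 0 0),
      biprod.lift (biprod.desc ((K11 z - r) • canMor R (by decide)) 0)
        (biprod.desc ((K12 z) • canMor R (by decide)) 0)), ?_⟩, ?_⟩
    · apply Kext
      · intro _; simp [D2_1]; try ring
      · intro _; simp [D2_1]; try ring
      · intro _; simp [D2_1]; try ring
      · intro _; simp [D2_1]; try ring
    · rintro r' ⟨u, hu⟩
      have := congrArg (fun φ => K11 φ + K12 φ + K21 φ + K22 φ) hu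
      simp [D2_1] at this
      linear_combination -this
  · show t0 R ≫ 𝟙 _ = t0 R
    exact Category.comp_id _
  · show 𝟙 _ ≫ t0 R = t0 R
    exact Category.id_comp _
  · simp [mul2_00, one2, Prod.ext_iff]

/-- Let `R` be a PID and `E = End J` the endomorphism dg algebra of the
complex `J : I_{H₁} ⊕ I_{H₂} → I_{E₁} ⊕ I_{E₂} → I_{P₁} ⊕ I_{P₂}` (the resolution of the
constant representation `C` over the quiver of `A₂`).  Then `H⁰(E) ≅ R`, generated by the
identity, `H¹(E) = 0`, and `H²(E)` is free of rank `1`; the cohomology algebra `H(E)` is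
`R[t]/(t²)` with `t` of degree 2, and mapping `1 ↦ id` and `t` to a representative
`t₀ ∈ E²` defines a dg algebra quasi-isomorphism `H(E) → E` (the system of representatives
`{id, t₀}` being closed under multiplication; products of degree-2 elements land in
degree `4` where `E` vanishes, whence `t² = 0`). -/
theorem formality_spheres_stmt12 (R : Type) [CommRing R] [IsDomain R]
    [IsPrincipalIdealRing R] :
    ∃ t₀ : End2_2 R,
      -- `H⁰(E)` is free of rank 1, generated by the identity:
      (D2_0 R (one2 R) = 0) ∧
      (∀ z : End2_0 R, D2_0 R z = 0 →
        ∃! r : R, ∃ u : End2neg R, z - r • one2 R = D2neg R u) ∧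
      -- `H¹(E) = 0`:
      (∀ z : End2_1 R, D2_1 R z = 0 → ∃ u : End2_0 R, z = D2_0 R u) ∧
      -- `H²(E)` is free of rank 1, generated by `t₀`:
      (∀ z : End2_2 R, ∃! r : R, ∃ u : End2_1 R, z - r • t₀ = D2_1 R u) ∧
      -- the representatives `{id, t₀}` are closed under multiplication, so that
      -- `H(E) ≅ R[t]/(t²)` and class ↦ representative is a dg algebra quasi-isomorphism:
      mul2_02 R (one2 R) t₀ = t₀ ∧ mul2_20 R t₀ (one2 R) = t₀ ∧
      mul2_00 R (one2 R) (one2 R) = one2 R :=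
  Stmt12Aux.main R

end
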